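/- In the poset Δ⁺ of positive roots of type A_n with n ≥ 3, for 1 ≤ k ≤ n one has 𝔛^k({α₁}) = {(i,j) : 1 ≤ i ≤ j ≤ n−1 and j − i + 1 = n + 1 − k} ∪ {(k+1, n)}; in particular, 𝔛^n({α₁}) = {α₁, …, α_{n−1}} and 𝔛^{n+1}({α₁}) = {α_n}. -/

import Mathlib

open Finset

/-- The root order on pairs: `(i,j) ≼ (i',j')` iff `i' ≤ i` and `j ≤ j'`. -/
def rle (p q : ℕ × ℕ) : Prop := q.1 ≤ p.1 ∧ p.2 ≤ q.2

instance : DecidableRel rle := fun p q =>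
  inferInstanceAs (Decidable (q.1 ≤ p.1 ∧ p.2 ≤ q.2))

/-- The positive roots of type `A_n`, modelled as pairs `(i,j)` with `1 ≤ i ≤ j ≤ n`. -/
def roots (n : ℕ) : Finset (ℕ × ℕ) :=
  ((Finset.Icc 1 n) ×ˢ (Finset.Icc 1 n)).filter (fun p => p.1 ≤ p.2)

/-- `Γ` is an antichain in `Δ⁺(A_n)`: a set of pairwise incomparable positive roots. -/
def IsAC (n : ℕ) (Γ : Finset (ℕ × ℕ)) : Prop :=
  Γ ⊆ roots n ∧ ∀ p ∈ Γ, ∀ q ∈ Γ, rle p q → p = q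

/-- The upper ideal `I(Γ) = {x ∈ Δ⁺ : ∃ γ ∈ Γ, γ ≼ x}` generated by `Γ`. -/
def upIdeal (n : ℕ) (Γ : Finset (ℕ × ℕ)) : Finset (ℕ × ℕ) :=
  (roots n).filter (fun x => ∃ γ ∈ Γ, rle γ x)

/-- The set of maximal elements of `S` with respect to the root order. -/
def maxOf (S : Finset (ℕ × ℕ)) : Finset (ℕ × ℕ) :=
  S.filter (fun x => ∀ y ∈ S, rle x y → y = x)

/-- The set of minimal elements of `S` with respect to the root order. -/
def minOf (S : Finset (ℕ × ℕ)) : Finset (ℕ × ℕ) :=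
  S.filter (fun x => ∀ y ∈ S, rle y x → y = x)

/-- The reverse operator `𝔛`, sending an antichain `Γ` to the set of maximal
elements of `Δ⁺ \ I(Γ)`. -/
def Xrev (n : ℕ) (Γ : Finset (ℕ × ℕ)) : Finset (ℕ × ℕ) :=
  maxOf (roots n \ upIdeal n Γ)

/-- `r_Γ(γ) = #(I(Γ) \ {γ})_min − #I(Γ)_min + 1`. -/
def rGam (n : ℕ) (Γ : Finset (ℕ × ℕ)) (γ : ℕ × ℕ) : ℤ :=
  ((minOf (upIdeal n Γ \ {γ})).card : ℤ) - ((minOf (upIdeal n Γ)).card : ℤ) + 1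

/-- The OY-number `𝒴(Γ) = Σ_{γ ∈ Γ} r_Γ(γ)`; in particular `𝒴(∅) = 0`. -/
def OY (n : ℕ) (Γ : Finset (ℕ × ℕ)) : ℤ := ∑ γ ∈ Γ, rGam n Γ γ

def Gam (n k : ℕ) : Finset (ℕ × ℕ) :=
  (roots n).filter
    (fun p => (p.2 ≤ n - 1 ∧ p.2 - p.1 + 1 = n + 1 - k) ∨ p = (k + 1, n))

lemma mem_roots {n : ℕ} {p : ℕ × ℕ} :
    p ∈ roots n ↔ 1 ≤ p.1 ∧ p.1 ≤ p.2 ∧ p.2 ≤ n := by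
  simp only [roots, Finset.mem_filter, Finset.mem_product, Finset.mem_Icc]
  omega

lemma mem_Xrev {n : ℕ} {Γ : Finset (ℕ × ℕ)} {p : ℕ × ℕ} :
    p ∈ Xrev n Γ ↔ (p ∈ roots n ∧ ∀ γ ∈ Γ, ¬ rle γ p) ∧
      ∀ q ∈ roots n, (∀ γ ∈ Γ, ¬ rle γ q) → rle p q → q = p := by
  rw [Xrev, maxOf, Finset.mem_filter]
  simp only [upIdeal, Finset.mem_filter, Finset.mem_sdiff, not_and]
  constructor
  · rintro ⟨⟨hp, hI⟩, hmax⟩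
    refine ⟨⟨hp, by simpa using hI hp⟩, fun q hq hqI hr => ?_⟩
    exact hmax q ⟨hq, fun _ => by simpa using hqI⟩ hr
  · rintro ⟨⟨hp, hI⟩, hmax⟩
    refine ⟨⟨hp, fun _ => by simpa using hI⟩, fun q hq hr => ?_⟩
    exact hmax q hq.1 (by simpa using hq.2 hq.1) hr

lemma mem_Gam {n k : ℕ} (hk : 1 ≤ k) (hkn : k ≤ n) {p : ℕ × ℕ} :
    p ∈ Gam n k ↔ (1 ≤ p.1 ∧ p.1 ≤ p.2 ∧ p.2 ≤ n) ∧
      ((p.2 + 1 ≤ n ∧ p.2 + k = n + p.1) ∨ (p.1 = k + 1 ∧ p.2 = n)) := by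
  simp only [Gam, Finset.mem_filter, mem_roots, Prod.ext_iff]
  omega

lemma notin_up {n k : ℕ} (hk : 1 ≤ k) (hkn : k + 1 ≤ n) {q : ℕ × ℕ}
    (hq : 1 ≤ q.1 ∧ q.1 ≤ q.2 ∧ q.2 ≤ n) :
    (∀ γ ∈ Gam n k, ¬ rle γ q) ↔
      (k ≤ q.1 ∨ q.2 + k < q.1 + n) ∧ (k + 2 ≤ q.1 ∨ q.2 + 1 ≤ n) := by
  constructor
  · intro h
    refine ⟨?_, ?_⟩
    · by_contra hc
      push_neg at hc
      exact h (q.1, q.1 + n - k)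
        (by rw [mem_Gam hk (by omega)]; simp; omega)
        (by simp only [rle]; omega)
    · by_contra hc
      push_neg at hc
      exact h (k + 1, n)
        (by rw [mem_Gam hk (by omega)]; simp; omega)
        (by simp only [rle]; omega)
  · intro h γ hγ hr
    rw [mem_Gam hk (by omega)] at hγ
    simp only [rle] at hr
    omega

lemma Xrev_step {n k : ℕ} (hk : 1 ≤ k) (hkn : k + 1 ≤ n) :
    Xrev n (Gam n k) = Gam n (k + 1) := by
  ext p
  rw [mem_Xrev, mem_Gam (by omega) (by omega)]
  constructor
  · rintro ⟨⟨hp, hI⟩, hmax⟩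
    rw [mem_roots] at hp
    rw [notin_up hk hkn hp] at hI
    refine ⟨hp, ?_⟩
    by_cases hj : p.2 = n
    · right
      have h1 : k + 2 ≤ p.1 := by omega
      have h2 := hmax (k + 2, n) (mem_roots.mpr (by omega))
        (by rw [notin_up hk hkn (by omega)]; omega)
        (by simp only [rle]; omega)
      have ha : (k + 2, n).1 = p.1 := congrArg Prod.fst h2
      have hb : (k + 2, n).2 = p.2 := congrArg Prod.snd h2
      omega
    · left
      -- first: p.1 ≤ k
      have hi1 : ¬ (k + 2 ≤ p.1) := by
        intro hc
        have := hmax (p.1, n) (mem_roots.mpr (by omega))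
          (by rw [notin_up hk hkn (by omega)]; omega)
          (by simp only [rle]; omega)
        rw [← this] at hj
        exact hj rfl
      have hi2 : ¬ (p.1 = k + 1) := by
        intro hc
        have := hmax (k, n - 1) (mem_roots.mpr (by omega))
          (by rw [notin_up hk hkn (by omega)]; omega)
          (by simp only [rle]; omega)
        have : k = p.1 := congrArg Prod.fst this
        omega
      have hlen : ¬ (p.2 + k + 1 < n + p.1) := by
        intro hc
        have := hmax (p.1, p.2 + 1) (mem_roots.mpr (by omega))
          (by rw [notin_up hk hkn (by omega)]; omega)
          (by simp only [rle]; omega)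
        have : p.2 + 1 = p.2 := congrArg Prod.snd this
        omega
      omega
  · rintro ⟨hp, hcond⟩
    have hpr : p ∈ roots n := mem_roots.mpr hp
    refine ⟨⟨hpr, ?_⟩, ?_⟩
    · rw [notin_up hk hkn hp]; omega
    · intro q hq hqI hr
      rw [mem_roots] at hq
      rw [notin_up hk hkn hq] at hqI
      simp only [rle] at hr
      have : q.1 = p.1 ∧ q.2 = p.2 := by omega
      exact Prod.ext this.1 this.2

lemma Xrev_base {n : ℕ} (hn : 3 ≤ n) :
    Xrev n ({((1 : ℕ), (1 : ℕ))} : Finset (ℕ × ℕ)) = Gam n 1 := by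
  ext p
  rw [mem_Xrev, mem_Gam le_rfl (by omega)]
  simp only [Finset.mem_singleton, forall_eq, rle, mem_roots]
  constructor
  · rintro ⟨⟨hp, hI⟩, hmax⟩
    have := hmax (2, n) (by omega) (by omega) (by omega)
    have h1 : (2 : ℕ) = p.1 := congrArg Prod.fst this
    have h2 : n = p.2 := congrArg Prod.snd this
    refine ⟨hp, ?_⟩; omega
  · rintro ⟨hp, hcond⟩
    refine ⟨⟨hp, by omega⟩, ?_⟩
    intro q hq hqI hr
    have : q.1 = p.1 ∧ q.2 = p.2 := by omega
    exact Prod.ext this.1 this.2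

lemma Xrev_last {n : ℕ} (hn : 3 ≤ n) :
    Xrev n (Gam n n) = {((n : ℕ), (n : ℕ))} := by
  ext p
  rw [mem_Xrev, Finset.mem_singleton]
  constructor
  · rintro ⟨⟨hp, hI⟩, hmax⟩
    rw [mem_roots] at hp
    have h1 : ¬ (p.1 < n) := by
      intro hc
      exact hI (p.1, p.1) ((mem_Gam (by omega) le_rfl).mpr (by omega))
        (by simp only [rle]; omega)
    have : p.1 = p.2 := by omega
    have : p.1 = n ∧ p.2 = n := by omega
    exact Prod.ext this.1 this.2
  · intro hp
    subst hp
    refine ⟨⟨mem_roots.mpr (by omega), ?_⟩, ?_⟩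
    · intro γ hγ hr
      rw [mem_Gam (by omega) le_rfl] at hγ
      simp only [rle] at hr
      omega
    · intro q hq hqI hr
      rw [mem_roots] at hq
      simp only [rle] at hr
      have h1 : ¬ (q.1 < n) := by
        intro hc
        exact hqI (q.1, q.1) ((mem_Gam (by omega) le_rfl).mpr (by omega))
          (by simp only [rle]; omega)
      have : q.1 = n ∧ q.2 = n := by omega
      exact Prod.ext this.1 this.2

lemma Gam_n {n : ℕ} (hn : 3 ≤ n) :
    Gam n n = (Finset.Icc 1 (n - 1)).image (fun t => (t, t)) := by
  ext p
  rw [mem_Gam (by omega) le_rfl]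
  simp only [Finset.mem_image, Finset.mem_Icc, Prod.ext_iff]
  constructor
  · rintro ⟨hp, hcond⟩
    exact ⟨p.1, by omega, by omega, by omega⟩
  · rintro ⟨t, ht, h1, h2⟩
    omega

/-- In `Δ⁺(A_n)` with `n ≥ 3`, for `1 ≤ k ≤ n` one has
`𝔛^k({α₁}) = {(i,j) ∈ Δ⁺ : j ≤ n−1, j−i+1 = n+1−k} ∪ {(k+1,n)}`
(the union taken inside `Δ⁺`); in particular `𝔛^n({α₁}) = {α₁,…,α_{n−1}}` and
`𝔛^{n+1}({α₁}) = {α_n}`. -/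
theorem stmt10 (n : ℕ) (hn : 3 ≤ n) :
    (∀ k, 1 ≤ k → k ≤ n →
      (Xrev n)^[k] ({((1 : ℕ), (1 : ℕ))} : Finset (ℕ × ℕ))
        = (roots n).filter
            (fun p => (p.2 ≤ n - 1 ∧ p.2 - p.1 + 1 = n + 1 - k) ∨ p = (k + 1, n))) ∧
    (Xrev n)^[n] ({((1 : ℕ), (1 : ℕ))} : Finset (ℕ × ℕ))
      = (Finset.Icc 1 (n - 1)).image (fun t => (t, t)) ∧
    (Xrev n)^[n + 1] ({((1 : ℕ), (1 : ℕ))} : Finset (ℕ × ℕ)) = {(n, n)} := by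
  have key : ∀ k, 1 ≤ k → k ≤ n →
      (Xrev n)^[k] ({((1 : ℕ), (1 : ℕ))} : Finset (ℕ × ℕ)) = Gam n k := by
    intro k
    induction k with
    | zero => omega
    | succ m ih =>
      intro _ hm
      rcases Nat.eq_zero_or_pos m with hm0 | hm0
      · subst hm0
        simpa using Xrev_base hn
      · rw [Function.iterate_succ_apply', ih (by omega) (by omega),
          Xrev_step (by omega) (by omega)]
  refine ⟨fun k h1 h2 => key k h1 h2, ?_, ?_⟩
  · rw [key n (by omega) le_rfl, Gam_n hn]
  · rw [Function.iterate_succ_apply', key n (by omega) le_rfl, Xrev_last hn]
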